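/- (The rotated conic constraint guarantees frequency security for the exact trajectory) Let H, T_DB, T_G, T_E, Δf^max > 0 with T_G > T_E, let R_G > 0, R_E ≥ 0, and let p satisfy R_E ≤ p ≤ R_E + R_G. Define ΔP(τ) := ΔP_G(τ) + ΔP_E(τ) with ΔP_G(τ) = 0 for 0 ≤ τ < T_DB, ΔP_G(τ) = R_G·(τ − T_DB)/T_G for T_DB ≤ τ < T_G + T_DB, ΔP_G(τ) = R_G for τ ≥ T_G + T_DB, ΔP_E(τ) = R_E·τ/T_E for 0 ≤ τ < T_E, ΔP_E(τ) = R_E for τ ≥ T_E, and Δf(τ) := (1/(2H))·∫₀^τ (ΔP(s) − p) ds. Assume T_E ≤ T_DB + (p − R_E)·T_G/R_G and that the rotated conic constraint (p − R_E + R_G·T_DB/T_G)² ≤ (4·Δf^max·H − R_E·T_E)·R_G/T_G holds. Then Δf(τ) ≥ −Δf^max for all τ ≥ 0; that is, the conic constraint is a conservative (sufficient) condition for the exact frequency trajectory never to drop below −Δf^max. -/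

import Mathlib

open intervalIntegral

set_option maxHeartbeats 1000000 in
/-- The rotated conic constraint guarantees frequency security for the exact
trajectory: under the linear ramping PFR model with `R_E ≤ p ≤ R_E + R_G` and
`T_E ≤ T_DB + (p − R_E)·T_G/R_G`, if the rotated conic constraint
`(p − R_E + R_G·T_DB/T_G)² ≤ (4·Δf^max·H − R_E·T_E)·R_G/T_G` holds, then the exact
frequency deviation trajectory never drops below `−Δf^max`. -/
theorem stmt_13 (H T_DB T_G T_E Δfmax R_G R_E p : ℝ)
    (hH : 0 < H) (hTDB : 0 < T_DB) (hTG : 0 < T_G) (hTE : 0 < T_E) (hΔfmax : 0 < Δfmax)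
    (hTGE : T_E < T_G)
    (hRG : 0 < R_G) (hRE : 0 ≤ R_E) (hp1 : R_E ≤ p) (hp2 : p ≤ R_E + R_G)
    (ΔP : ℝ → ℝ)
    (hΔP : ∀ τ, ΔP τ =
      (if τ < T_DB then 0
       else if τ < T_G + T_DB then R_G * (τ - T_DB) / T_G
       else R_G)
      + (if τ < T_E then R_E * τ / T_E else R_E))
    (Δf : ℝ → ℝ)
    (hΔf : ∀ τ, Δf τ = (1 / (2 * H)) * ∫ s in (0:ℝ)..τ, (ΔP s - p))
    (hnadir : T_E ≤ T_DB + (p - R_E) * T_G / R_G)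
    (hconic : (p - R_E + R_G * T_DB / T_G) ^ 2
        ≤ (4 * Δfmax * H - R_E * T_E) * R_G / T_G) :
    ∀ τ ∈ Set.Ici (0:ℝ), -Δfmax ≤ Δf τ := by
  intro τ hτ
  simp only [Set.mem_Ici] at hτ
  have hA0 : 0 ≤ p - R_E := by linarith
  have hAR : p - R_E ≤ R_G := by linarith
  set τs : ℝ := T_DB + (p - R_E) * T_G / R_G with hτsdef
  have hτsTDB : T_DB ≤ τs := by
    have : 0 ≤ (p - R_E) * T_G / R_G := by positivity
    simp only [hτsdef]; linarith
  have hτsle : τs ≤ T_G + T_DB := by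
    have h1 : (p - R_E) * T_G / R_G ≤ T_G := by
      rw [div_le_iff₀ hRG]; nlinarith
    simp only [hτsdef]; linarith
  have hτs0 : 0 ≤ τs := by linarith
  have hTEτs : T_E ≤ τs := hnadir
  -- continuous versions of the ramp functions
  set φG : ℝ → ℝ := fun s => min R_G (R_G * max (s - T_DB) 0 / T_G) with hφGdef
  set φE : ℝ → ℝ := fun s => min R_E (R_E * s / T_E) with hφEdef
  have hφGcont : Continuous φG := by
    apply Continuous.min continuous_const
    exact (continuous_const.mul ((continuous_id.sub continuous_const).max continuous_const)).div_const T_G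
  have hφEcont : Continuous φE := by
    apply Continuous.min continuous_const
    exact (continuous_const.mul continuous_id).div_const T_E
  set f : ℝ → ℝ := fun s => φG s + φE s - p with hfdef
  have hfcont : Continuous f := (hφGcont.add hφEcont).sub continuous_const
  have hInt : ∀ a b : ℝ, IntervalIntegrable f MeasureTheory.volume a b :=
    fun a b => hfcont.intervalIntegrable a b
  -- the integrand agrees with ΔP s - p everywhere
  have hagree : ∀ s, ΔP s - p = f s := by
    intro s
    rw [hΔP s]
    have hG : (if s < T_DB then (0:ℝ)
        else if s < T_G + T_DB then R_G * (s - T_DB) / T_G else R_G) = φG s := by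
      simp only [hφGdef]
      split_ifs with h1 h2
      · rw [max_eq_right (by linarith), mul_zero, zero_div, min_eq_right hRG.le]
      · rw [max_eq_left (by linarith), eq_comm, min_eq_right]
        rw [div_le_iff₀ hTG]; nlinarith
      · rw [max_eq_left (by linarith), eq_comm, min_eq_left]
        rw [le_div_iff₀ hTG]; nlinarith
    have hE : (if s < T_E then R_E * s / T_E else R_E) = φE s := by
      simp only [hφEdef]
      split_ifs with h1
      · rw [eq_comm, min_eq_right]
        rw [div_le_iff₀ hTE]; nlinarith
      · rw [eq_comm, min_eq_left]
        rw [le_div_iff₀ hTE]; nlinarith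
    rw [hG, hE, hfdef]
  have hΔf' : Δf τ = (1 / (2 * H)) * ∫ s in (0:ℝ)..τ, f s := by
    rw [hΔf τ]
    congr 1
    exact intervalIntegral.integral_congr fun s _ => hagree s
  -- sign of f before and after τs
  have hneg : ∀ s, s ≤ τs → f s ≤ 0 := by
    intro s hs
    have h2 : max (s - T_DB) 0 ≤ (p - R_E) * T_G / R_G := by
      apply max_le
      · simp only [hτsdef] at hs; linarith
      · positivity
    have h2' : max (s - T_DB) 0 * R_G ≤ (p - R_E) * T_G := by
      rw [← le_div_iff₀ hRG]; exact h2
    have h1 : φG s ≤ p - R_E := by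
      refine le_trans (min_le_right _ _) ?_
      rw [div_le_iff₀ hTG]; nlinarith
    have h3 : φE s ≤ R_E := min_le_left _ _
    simp only [hfdef]; linarith
  have hpos : ∀ s, τs ≤ s → 0 ≤ f s := by
    intro s hs
    have hsd : (p - R_E) * T_G / R_G ≤ s - T_DB := by
      simp only [hτsdef] at hs; linarith
    have hsd' : (p - R_E) * T_G ≤ (s - T_DB) * R_G := by
      rw [← div_le_iff₀ hRG]; exact hsd
    have h1 : p - R_E ≤ φG s := by
      apply le_min hAR
      rw [le_div_iff₀ hTG]
      have h3 : s - T_DB ≤ max (s - T_DB) 0 := le_max_left _ _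
      nlinarith [mul_le_mul_of_nonneg_left h3 hRG.le]
    have h2 : R_E ≤ φE s := by
      apply le_min le_rfl
      rw [le_div_iff₀ hTE]
      have : T_E ≤ s := le_trans hTEτs hs
      exact mul_le_mul_of_nonneg_left this hRE
    simp only [hfdef]; linarith
  -- compute the integral up to τs
  have hIG : ∫ s in (0:ℝ)..τs, φG s
      = R_G / T_G * ((τs ^ 2 - T_DB ^ 2) / 2 - T_DB * (τs - T_DB)) := by
    rw [← intervalIntegral.integral_add_adjacent_intervals
      (hφGcont.intervalIntegrable 0 T_DB) (hφGcont.intervalIntegrable T_DB τs)]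
    have e1 : ∫ s in (0:ℝ)..T_DB, φG s = 0 := by
      rw [intervalIntegral.integral_congr (g := fun _ => (0:ℝ)) ?_, integral_const, smul_zero]
      intro s hs
      rw [Set.uIcc_of_le hTDB.le] at hs
      simp only [hφGdef]
      rw [max_eq_right (by linarith [hs.2]), mul_zero, zero_div, min_eq_right hRG.le]
    have e2 : ∫ s in T_DB..τs, φG s
        = R_G / T_G * ((τs ^ 2 - T_DB ^ 2) / 2 - T_DB * (τs - T_DB)) := by
      rw [intervalIntegral.integral_congr (g := fun s => R_G / T_G * (s - T_DB)) ?_]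
      · rw [integral_const_mul, integral_sub intervalIntegrable_id intervalIntegrable_const,
          integral_id, integral_const]
        simp only [smul_eq_mul]; ring
      · intro s hs
        rw [Set.uIcc_of_le hτsTDB] at hs
        simp only [hφGdef]
        have hb : R_G * (s - T_DB) / T_G ≤ R_G := by
          rw [div_le_iff₀ hTG]
          have h5 : s ≤ τs := hs.2
          nlinarith
        rw [max_eq_left (by linarith [hs.1]), min_eq_right hb]
        ring
    rw [e1, e2, zero_add]
  have hIE : ∫ s in (0:ℝ)..τs, φE s = R_E * T_E / 2 + R_E * (τs - T_E) := by
    rw [← intervalIntegral.integral_add_adjacent_intervals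
      (hφEcont.intervalIntegrable 0 T_E) (hφEcont.intervalIntegrable T_E τs)]
    have e1 : ∫ s in (0:ℝ)..T_E, φE s = R_E * T_E / 2 := by
      rw [intervalIntegral.integral_congr (g := fun s => R_E / T_E * s) ?_]
      · rw [integral_const_mul, integral_id]
        field_simp
        ring
      · intro s hs
        rw [Set.uIcc_of_le hTE.le] at hs
        simp only [hφEdef]
        have hb : R_E * s / T_E ≤ R_E := by
          rw [div_le_iff₀ hTE]
          nlinarith [hs.1, hs.2]
        rw [min_eq_right hb]
        ring
    have e2 : ∫ s in T_E..τs, φE s = R_E * (τs - T_E) := by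
      rw [intervalIntegral.integral_congr (g := fun _ => R_E) ?_, integral_const, smul_eq_mul,
        mul_comm]
      intro s hs
      rw [Set.uIcc_of_le hTEτs] at hs
      simp only [hφEdef]
      rw [min_eq_left]
      rw [le_div_iff₀ hTE]
      nlinarith [hs.1]
    rw [e1, e2]
  have hIval : ∫ s in (0:ℝ)..τs, f s
      = R_G / T_G * ((τs ^ 2 - T_DB ^ 2) / 2 - T_DB * (τs - T_DB))
        + (R_E * T_E / 2 + R_E * (τs - T_E)) - p * τs := by
    have h6 : ∫ s in (0:ℝ)..τs, f s
        = (∫ s in (0:ℝ)..τs, (φG s + φE s)) - ∫ s in (0:ℝ)..τs, (p:ℝ) := by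
      exact integral_sub (f := fun s => φG s + φE s) (g := fun _ => p) ((hφGcont.add hφEcont).intervalIntegrable 0 τs) intervalIntegrable_const
    rw [h6, integral_add (hφGcont.intervalIntegrable 0 τs) (hφEcont.intervalIntegrable 0 τs),
      hIG, hIE, integral_const]
    simp only [smul_eq_mul]; ring
  -- monotonicity: the running integral is minimized at τs
  have hmin : (∫ s in (0:ℝ)..τs, f s) ≤ ∫ s in (0:ℝ)..τ, f s := by
    rcases le_total τ τs with hcase | hcase
    · have hsplit : (∫ s in (0:ℝ)..τ, f s) + ∫ s in τ..τs, f s = ∫ s in (0:ℝ)..τs, f s :=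
        intervalIntegral.integral_add_adjacent_intervals (hInt 0 τ) (hInt τ τs)
      have hle : (∫ s in τ..τs, f s) ≤ 0 := by
        have h0 : 0 ≤ ∫ s in τ..τs, (-f s) := by
          apply intervalIntegral.integral_nonneg hcase
          intro u hu
          have := hneg u hu.2
          linarith
        rw [intervalIntegral.integral_neg] at h0
        linarith
      linarith
    · have hsplit : (∫ s in (0:ℝ)..τs, f s) + ∫ s in τs..τ, f s = ∫ s in (0:ℝ)..τ, f s :=
        intervalIntegral.integral_add_adjacent_intervals (hInt 0 τs) (hInt τs τ)
      have hge : 0 ≤ ∫ s in τs..τ, f s := by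
        apply intervalIntegral.integral_nonneg hcase
        intro u hu
        exact hpos u hu.1
      linarith
  -- the conic constraint bounds the integral at τs
  have hX : p - R_E + R_G * T_DB / T_G = ((p - R_E) * T_G + R_G * T_DB) / T_G := by
    field_simp
  have hc2 : ((p - R_E) * T_G + R_G * T_DB) ^ 2 ≤ (4 * Δfmax * H - R_E * T_E) * R_G * T_G := by
    rw [hX, div_pow, div_le_div_iff₀ (by positivity) hTG] at hconic
    nlinarith [hconic, sq_nonneg ((p - R_E) * T_G + R_G * T_DB), hTG]
  have key : (p - R_E) ^ 2 * T_G + 2 * R_G * ((p - R_E) * T_DB) + R_G * (R_E * T_E)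
      ≤ 4 * H * Δfmax * R_G := by
    nlinarith [hc2, sq_nonneg (R_G * T_DB), mul_pos hTG hRG, hTG]
  have h4 : (p - R_E) ^ 2 * T_G / (2 * R_G) + (p - R_E) * T_DB + R_E * T_E / 2
      ≤ 2 * H * Δfmax := by
    have h5 : (p - R_E) ^ 2 * T_G / (2 * R_G)
        ≤ 2 * H * Δfmax - (p - R_E) * T_DB - R_E * T_E / 2 := by
      rw [div_le_iff₀ (by positivity)]
      nlinarith [key]
    linarith
  have hsimp : R_G / T_G * ((τs ^ 2 - T_DB ^ 2) / 2 - T_DB * (τs - T_DB))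
        + (R_E * T_E / 2 + R_E * (τs - T_E)) - p * τs
      = -((p - R_E) ^ 2 * T_G / (2 * R_G) + (p - R_E) * T_DB + R_E * T_E / 2) := by
    rw [hτsdef]
    field_simp
    ring
  have hVal : -(2 * H * Δfmax) ≤ ∫ s in (0:ℝ)..τs, f s := by
    rw [hIval, hsimp, neg_le_neg_iff]
    linarith [h4]
  -- conclude
  have hItau : -(2 * H * Δfmax) ≤ ∫ s in (0:ℝ)..τ, f s := le_trans hVal hmin
  rw [hΔf']
  have h2H : (0:ℝ) < 1 / (2 * H) := by positivity
  have hmul := mul_le_mul_of_nonneg_left hItau h2H.le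
  calc -Δfmax = 1 / (2 * H) * -(2 * H * Δfmax) := by field_simp
    _ ≤ 1 / (2 * H) * ∫ s in (0:ℝ)..τ, f s := hmul
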